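/- Assume (LᵀP)_j > 0 for every j = 1,…,M. If α̃ in the nonnegative orthant is a global maximizer of the Poisson log-likelihood l over the nonnegative orthant, then α̃ satisfies the fixed-point equation α̃_j = α̃_j · (Lᵀ(d ⊙ exp(−Lα̃)))_j / (LᵀP)_j for every j = 1,…,M, i.e. α̃ is a fixed point of the operator T defined by T(α)_j = α_j · (Lᵀ(d ⊙ exp(−Lα)))_j / (LᵀP)_j. -/

import Mathlib

/-- The Poisson log-likelihood for the Raman lidar inverse problem. -/
noncomputable def lidarLogLik {N M : ℕ} (L : Matrix (Fin N) (Fin M) ℝ)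
    (d : Fin N → ℝ) (P : Fin N → ℕ) (α : Fin M → ℝ) : ℝ :=
  ∑ i, ((P i : ℝ) * Real.log (d i) - (L.mulVec α i) * (P i : ℝ)
    - d i * Real.exp (-(L.mulVec α i)) - Real.log (Nat.factorial (P i)))

/-- If `(LᵀP)_j > 0` for every `j` and `α̃` in the nonnegative orthant maximizes the Poisson
log-likelihood over the nonnegative orthant, then `α̃` is a fixed point of the operator
`T(α)_j = α_j (Lᵀ(d ⊙ exp(−Lα)))_j / (LᵀP)_j`. -/
theorem stmt_9 {N M : ℕ} (hN : 0 < N) (hM : 0 < M)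
    (L : Matrix (Fin N) (Fin M) ℝ) (d : Fin N → ℝ) (hd : ∀ i, 0 < d i)
    (P : Fin N → ℕ)
    (hLP : ∀ j : Fin M, 0 < ∑ i, L i j * (P i : ℝ))
    (a : Fin M → ℝ) (ha : ∀ j, 0 ≤ a j)
    (hmax : ∀ α : Fin M → ℝ, (∀ j, 0 ≤ α j) →
      lidarLogLik L d P α ≤ lidarLogLik L d P a) :
    ∀ j : Fin M,
      a j = a j * (∑ i, L i j * (d i * Real.exp (-(L.mulVec a i)))) /
        (∑ i, L i j * (P i : ℝ)) := by
  intro j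
  rcases eq_or_lt_of_le (ha j) with h0 | hpos
  · rw [← h0]; simp
  -- a j > 0: show the partial derivative vanishes
  set b : Fin N → ℝ := L.mulVec a with hb
  -- the one-variable restriction
  set f : ℝ → ℝ := fun t => ∑ i, ((P i : ℝ) * Real.log (d i)
      - (b i + t * L i j) * (P i : ℝ)
      - d i * Real.exp (-(b i + t * L i j)) - Real.log (Nat.factorial (P i))) with hf
  have hcoord : ∀ t : ℝ, L.mulVec (fun k => a k + t * (if k = j then (1:ℝ) else 0))
      = fun i => b i + t * L i j := by
    intro t
    funext i
    simp only [Matrix.mulVec, dotProduct, hb]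
    simp only [mul_add, Finset.sum_add_distrib]
    congr 1
    rw [Finset.sum_eq_single j]
    · rw [if_pos rfl]; ring
    · intro k _ hk
      rw [if_neg hk]; ring
    · intro h; exact absurd (Finset.mem_univ j) h
  have hfval : ∀ t : ℝ, f t = lidarLogLik L d P (fun k => a k + t * (if k = j then (1:ℝ) else 0)) := by
    intro t
    simp only [lidarLogLik, hcoord t, hf]
  have hf0 : f 0 = lidarLogLik L d P a := by
    rw [hfval 0]
    congr 1
    funext k
    ring
  have hderiv : HasDerivAt f (∑ i, (- L i j * (P i : ℝ)
      + d i * (L i j * Real.exp (-(b i))))) 0 := by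
    apply HasDerivAt.fun_sum
    intro i _
    have h1 : HasDerivAt (fun t : ℝ => b i + t * L i j) (L i j) 0 := by
      simpa using (hasDerivAt_id (0:ℝ)).mul_const (L i j) |>.const_add (b i)
    have h2 : HasDerivAt (fun t : ℝ => Real.exp (-(b i + t * L i j)))
        (Real.exp (-(b i + 0 * L i j)) * (-(L i j))) 0 :=
      (h1.neg.exp)
    have := (((h1.mul_const ((P i : ℝ))).const_sub ((P i : ℝ) * Real.log (d i))).sub
        (h2.const_mul (d i))).sub_const (Real.log (Nat.factorial (P i)))
    convert this using 1
    · funext t; simp only [Pi.sub_apply]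
    · simp only [zero_mul, add_zero]; ring
  have hlocmax : IsLocalMax f 0 := by
    have : ∀ t ∈ Set.Ioo (-(a j)) (a j), f t ≤ f 0 := by
      intro t ht
      rw [hfval t, hf0]
      apply hmax
      intro k
      rcases eq_or_ne k j with rfl | hk
      · rw [if_pos rfl, mul_one]
        linarith [ht.1]
      · simp [if_neg hk, ha k]
    filter_upwards [Ioo_mem_nhds (by linarith : -(a j) < 0) hpos] using this
  have hzero := hlocmax.hasDerivAt_eq_zero hderiv
  have hsum : ∑ i, L i j * (d i * Real.exp (-(b i))) = ∑ i, L i j * (P i : ℝ) := by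
    have : ∑ i, (- L i j * (P i : ℝ) + d i * (L i j * Real.exp (-(b i)))) = 0 := hzero
    rw [Finset.sum_add_distrib] at this
    have h2 : ∑ i, d i * (L i j * Real.exp (-(b i)))
        = ∑ i, L i j * (d i * Real.exp (-(b i))) := by
      apply Finset.sum_congr rfl; intro i _; ring
    have h3 : ∑ i, - L i j * (P i : ℝ) = - ∑ i, L i j * (P i : ℝ) := by
      rw [← Finset.sum_neg_distrib]
      apply Finset.sum_congr rfl; intro i _; ring
    rw [h2, h3] at this
    linarith
  rw [hsum, mul_div_assoc, div_self (hLP j).ne', mul_one]
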